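/- If a finite simple graph G on n ≥ k vertices is k-symmetric (for k ≥ 2), then G is (k-1)-symmetric. -/

import Mathlib

/-- The number of `k`-element vertex subsets of `G` whose induced subgraph is
isomorphic to `H`. -/
noncomputable def symCount {V : Type*} [Fintype V] (G : SimpleGraph V) {k : ℕ}
    (H : SimpleGraph (Fin k)) : ℕ :=
  Nat.card {s : Finset V // s.card = k ∧ Nonempty (G.induce (s : Set V) ≃g H)}

/-- `G` is `k`-symmetric: for every graph `H` on `k` vertices, the density of `H`
as an induced subgraph of `G` equals `(k! / |Aut H|) / 2 ^ C(k,2)`, the probability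
that the random graph `G(k, 1/2)` is isomorphic to `H`.  Stated multiplicatively:
`symCount G H * |Aut H| * 2 ^ C(k,2) = C(n,k) * k!`. -/
def IsKSym {V : Type*} [Fintype V] (G : SimpleGraph V) (k : ℕ) : Prop :=
  ∀ H : SimpleGraph (Fin k),
    symCount G H * Nat.card (H ≃g H) * 2 ^ (k.choose 2) =
      (Fintype.card V).choose k * k.factorial

section Aux

open Function

variable {V : Type*} [Fintype V]

instance finiteGraphEmb {k : ℕ} {H : SimpleGraph (Fin k)} {G : SimpleGraph V} :
    Finite (H ↪g G) :=
  Finite.of_injective (fun f => (f : Fin k → V)) DFunLike.coe_injective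

instance finiteGraphIso {k l : ℕ} {H : SimpleGraph (Fin k)} {H' : SimpleGraph (Fin l)} :
    Finite (H ≃g H') :=
  Finite.of_injective (fun f => (f : Fin k → Fin l)) DFunLike.coe_injective

/-- The isomorphism between `H` and the subgraph induced by the range of an embedding. -/
noncomputable def embToIso {k : ℕ} {H : SimpleGraph (Fin k)} {G : SimpleGraph V}
    (f : H ↪g G) (s : Set V) (hs : Set.range (f : Fin k → V) = s) :
    H ≃g G.induce s where
  toEquiv := (Equiv.ofInjective _ f.injective).trans (Equiv.setCongr hs)
  map_rel_iff' := by
    intro i j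
    simp only [Equiv.trans_apply, Equiv.setCongr_apply, SimpleGraph.comap_adj,
      Function.Embedding.coe_subtype, Equiv.ofInjective_apply]
    exact f.map_adj_iff

/-- Bridge lemma: the number of induced embeddings equals `symCount` times the
number of automorphisms. -/
lemma card_emb {k : ℕ} (G : SimpleGraph V) (H : SimpleGraph (Fin k)) :
    Nat.card (H ↪g G) = symCount G H * Nat.card (H ≃g H) := by
  classical
  unfold symCount
  rw [← Nat.card_prod]
  refine (Nat.card_eq_of_bijective ?_ ?_).symm
  · exact fun p =>
      (SimpleGraph.Embedding.induce ((p.1 : Finset V) : Set V)).comp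
        ((p.1.2.2.some.symm.comp p.2).toEmbedding)
  constructor
  · rintro ⟨⟨s, hs⟩, a⟩ ⟨⟨t, ht⟩, b⟩ hpq
    have hfun := congrArg (fun f : H ↪g G => (f : Fin k → V)) hpq
    simp only [SimpleGraph.Embedding.coe_comp] at hfun
    have hrange : ∀ (s : Finset V) (hs : s.card = k ∧ Nonempty (G.induce (s : Set V) ≃g H))
        (a : H ≃g H), Set.range
          ((SimpleGraph.Embedding.induce ((s : Finset V) : Set V)).comp
            ((hs.2.some.symm.comp a).toEmbedding) : Fin k → V) = (s : Set V) := by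
      intro s hs a
      ext v
      simp only [SimpleGraph.Embedding.coe_comp, Set.mem_range, Function.comp_apply]
      constructor
      · rintro ⟨i, rfl⟩
        exact (hs.2.some.symm (a i)).2
      · intro hv
        refine ⟨a.symm (hs.2.some ⟨v, hv⟩), ?_⟩
        show ((hs.2.some.symm (a (a.symm (hs.2.some ⟨v, hv⟩)))) : V) = v
        simp

    have hst : s = t := by
      have h1 := hrange s hs a
      have h2 := hrange t ht b
      have h3 : (s : Set V) = (t : Set V) := by
        rw [← h1, ← h2]
        simp only [SimpleGraph.Embedding.coe_comp]
        exact congrArg Set.range hfun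
      exact Finset.coe_injective h3
    subst hst
    have hab : a = b := RelIso.ext (fun i => by simpa using congrFun hfun i)
    simp [hab]
  · intro f
    have hsc : ((Finset.univ.image (f : Fin k → V) : Finset V) : Set V)
        = Set.range (f : Fin k → V) := by
      simp [Set.image_univ]
    have hcard : (Finset.univ.image (f : Fin k → V)).card = k := by
      rw [Finset.card_image_of_injective _ f.injective, Finset.card_univ, Fintype.card_fin]
    let f' : H ≃g G.induce ((Finset.univ.image (f : Fin k → V) : Finset V) : Set V) :=
      embToIso f _ hsc.symm
    have hne : Nonempty (G.induce ((Finset.univ.image (f : Fin k → V) : Finset V) : Set V) ≃g H) :=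
      ⟨f'.symm⟩
    refine ⟨⟨⟨Finset.univ.image (f : Fin k → V), hcard, hne⟩, f'.trans hne.some⟩, ?_⟩
    apply RelEmbedding.ext
    intro i
    simp only [SimpleGraph.Embedding.coe_comp, Function.comp_apply]
    show ((hne.some.symm.comp (f'.trans hne.some)) i : V) = f i
    have : hne.some.symm.comp (f'.trans hne.some) i = f' i := by
      show hne.some.symm ((f'.trans hne.some) i) = f' i
      simp [RelIso.trans_apply]
    rw [this]
    rfl

/-- Extend a graph on `Fin m` to a graph on `Fin (m+1)` by adding one vertex
whose adjacencies are given by `c`. -/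
def extGraph {m : ℕ} (H' : SimpleGraph (Fin m)) (c : Fin m → Bool) :
    SimpleGraph (Fin (m + 1)) where
  Adj i j := Fin.lastCases
      (Fin.lastCases False (fun j' => c j' = true) j)
      (fun i' => Fin.lastCases (c i' = true) (fun j' => H'.Adj i' j') j) i
  symm := by
    constructor
    intro i j
    induction i using Fin.lastCases with
    | last => induction j using Fin.lastCases with
      | last => simp
      | cast j' => simp
    | cast i' => induction j using Fin.lastCases with
      | last => simp
      | cast j' => simp [SimpleGraph.adj_comm]
  loopless := by
    constructor
    intro i
    induction i using Fin.lastCases with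
    | last => simp
    | cast i' => simp

@[simp] lemma extGraph_adj_cc {m : ℕ} (H' : SimpleGraph (Fin m)) (c : Fin m → Bool)
    (i j : Fin m) : (extGraph H' c).Adj i.castSucc j.castSucc ↔ H'.Adj i j := by
  simp [extGraph]

@[simp] lemma extGraph_adj_cl {m : ℕ} (H' : SimpleGraph (Fin m)) (c : Fin m → Bool)
    (i : Fin m) : (extGraph H' c).Adj i.castSucc (Fin.last m) ↔ c i = true := by
  simp [extGraph]

@[simp] lemma extGraph_adj_lc {m : ℕ} (H' : SimpleGraph (Fin m)) (c : Fin m → Bool)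
    (j : Fin m) : (extGraph H' c).Adj (Fin.last m) j.castSucc ↔ c j = true := by
  simp [extGraph]

@[simp] lemma extGraph_adj_ll {m : ℕ} (H' : SimpleGraph (Fin m)) (c : Fin m → Bool) :
    ¬ (extGraph H' c).Adj (Fin.last m) (Fin.last m) := by
  simp [extGraph]

/-- The canonical embedding of `H'` into any of its one-vertex extensions. -/
def extEmb {m : ℕ} (H' : SimpleGraph (Fin m)) (c : Fin m → Bool) :
    H' ↪g extGraph H' c where
  toEmbedding := Fin.castSuccEmb
  map_rel_iff' := by intro i j; exact extGraph_adj_cc H' c i j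

lemma sigma_ext_ext {m : ℕ} {H' : SimpleGraph (Fin m)} {G : SimpleGraph V}
    {c₁ c₂ : Fin m → Bool} {g₁ : extGraph H' c₁ ↪g G} {g₂ : extGraph H' c₂ ↪g G}
    (hc : c₁ = c₂) (hg : ∀ i, g₁ i = g₂ i) :
    (⟨c₁, g₁⟩ : Σ c : Fin m → Bool, extGraph H' c ↪g G) = ⟨c₂, g₂⟩ := by
  subst hc
  exact congrArg _ (RelEmbedding.ext hg)

lemma sigma_emb_ext {m : ℕ} {H' : SimpleGraph (Fin m)} {G : SimpleGraph V}
    {f₁ f₂ : H' ↪g G} {v₁ : {v : V // v ∉ Set.range (f₁ : Fin m → V)}}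
    {v₂ : {v : V // v ∉ Set.range (f₂ : Fin m → V)}}
    (hf : ∀ i, f₁ i = f₂ i) (hv : (v₁ : V) = v₂) :
    (⟨f₁, v₁⟩ : Σ f : H' ↪g G, {v : V // v ∉ Set.range (f : Fin m → V)}) = ⟨f₂, v₂⟩ := by
  have : f₁ = f₂ := RelEmbedding.ext hf
  subst this
  exact congrArg _ (Subtype.ext hv)

/-- The key double-counting bijection. -/
lemma card_sigma_eq {m : ℕ} (G : SimpleGraph V) (H' : SimpleGraph (Fin m)) :
    Nat.card (Σ c : Fin m → Bool, (extGraph H' c ↪g G)) =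
      Nat.card (Σ f : H' ↪g G, {v : V // v ∉ Set.range (f : Fin m → V)}) := by
  classical
  refine Nat.card_eq_of_bijective (fun p =>
    ⟨p.2.comp (extEmb H' p.1), ⟨p.2 (Fin.last m), ?_⟩⟩) ⟨?_, ?_⟩
  · rintro ⟨i, hi⟩
    simp only [SimpleGraph.Embedding.coe_comp, Function.comp_apply] at hi
    have : (extEmb H' p.1) i = Fin.last m := p.2.injective hi
    have h2 : Fin.castSucc i = Fin.last m := this
    exact (Fin.castSucc_lt_last i).ne h2
  · rintro ⟨c₁, g₁⟩ ⟨c₂, g₂⟩ h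
    have hfst := congrArg (fun p : (Σ f : H' ↪g G, {v : V // v ∉ Set.range (f : Fin m → V)}) =>
      (p.1 : Fin m → V)) h
    have hsnd := congrArg (fun p : (Σ f : H' ↪g G, {v : V // v ∉ Set.range (f : Fin m → V)}) =>
      (p.2 : V)) h
    simp only [SimpleGraph.Embedding.coe_comp] at hfst hsnd
    have hg : ∀ i : Fin (m + 1), g₁ i = g₂ i := by
      intro i
      induction i using Fin.lastCases with
      | last => exact hsnd
      | cast i' =>
        have := congrFun hfst i'
        exact this
    have hc : c₁ = c₂ := by
      funext i
      have h1 : G.Adj (g₁ i.castSucc) (g₁ (Fin.last m)) ↔ (c₁ i = true) := by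
        rw [g₁.map_adj_iff]
        exact extGraph_adj_cl H' c₁ i
      have h2 : G.Adj (g₂ i.castSucc) (g₂ (Fin.last m)) ↔ (c₂ i = true) := by
        rw [g₂.map_adj_iff]
        exact extGraph_adj_cl H' c₂ i
      rw [hg, hg] at h1
      have : (c₁ i = true) ↔ (c₂ i = true) := h1.symm.trans h2
      cases hb1 : c₁ i <;> cases hb2 : c₂ i <;> simp_all
    exact sigma_ext_ext hc hg
  · rintro ⟨f, v, hv⟩
    set c : Fin m → Bool := fun i => decide (G.Adj (f i) v) with hc
    set g : Fin (m + 1) → V := Fin.lastCases v (fun i => f i) with hgdef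
    have hglast : g (Fin.last m) = v := by simp [hgdef]
    have hgcast : ∀ i : Fin m, g i.castSucc = f i := by
      intro i; simp [hgdef]
    have ginj : Function.Injective g := by
      intro i j hij
      induction i using Fin.lastCases with
      | last =>
        induction j using Fin.lastCases with
        | last => rfl
        | cast j' =>
          rw [hglast, hgcast] at hij
          exact absurd ⟨j', hij.symm⟩ hv
      | cast i' =>
        induction j using Fin.lastCases with
        | last =>
          rw [hglast, hgcast] at hij
          exact absurd ⟨i', hij⟩ hv
        | cast j' =>
          rw [hgcast, hgcast] at hij
          rw [f.injective hij]
    have hadj : ∀ i j : Fin (m + 1), G.Adj (g i) (g j) ↔ (extGraph H' c).Adj i j := by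
      intro i j
      induction i using Fin.lastCases with
      | last =>
        induction j using Fin.lastCases with
        | last => simp [hglast, G.irrefl]
        | cast j' =>
          rw [hglast, hgcast, extGraph_adj_lc, hc, G.adj_comm]
          simp
      | cast i' =>
        induction j using Fin.lastCases with
        | last =>
          rw [hglast, hgcast, extGraph_adj_cl, hc]
          simp
        | cast j' =>
          rw [hgcast, hgcast, extGraph_adj_cc, f.map_adj_iff]
    refine ⟨⟨c, ⟨⟨g, ginj⟩, fun {i j} => (hadj i j)⟩⟩, ?_⟩
    refine sigma_emb_ext (fun i => ?_) ?_
    · exact hgcast i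
    · exact hglast

lemma key_step (G : SimpleGraph V) (m : ℕ) (hn : m + 1 ≤ Fintype.card V)
    (h : IsKSym G (m + 1)) : IsKSym G m := by
  classical
  intro H'
  rw [← card_emb]
  set n := Fintype.card V with hndef
  letI : ∀ c : Fin m → Bool, Fintype (extGraph H' c ↪g G) := fun c => Fintype.ofFinite _
  letI : Fintype (H' ↪g G) := Fintype.ofFinite _
  letI : ∀ f : H' ↪g G, Fintype {v : V // v ∉ Set.range (f : Fin m → V)} :=
    fun f => Fintype.ofFinite _
  have hord : ∀ c : Fin m → Bool,
      Nat.card (extGraph H' c ↪g G) * 2 ^ ((m + 1).choose 2) =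
        n.choose (m + 1) * (m + 1).factorial := by
    intro c
    rw [card_emb]
    exact h (extGraph H' c)
  have hfib : ∀ f : H' ↪g G,
      Nat.card {v : V // v ∉ Set.range (f : Fin m → V)} = n - m := by
    intro f
    have h0 := Set.ncard_add_ncard_compl (Set.range (f : Fin m → V))
      (Set.toFinite _) (Set.toFinite _)
    have hr : (Set.range (f : Fin m → V)).ncard = m := by
      rw [← Nat.card_coe_set_eq, Nat.card_range_of_injective f.injective,
        Nat.card_eq_fintype_card, Fintype.card_fin]
    have hcompl : Nat.card {v : V // v ∉ Set.range (f : Fin m → V)} =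
        (Set.range (f : Fin m → V))ᶜ.ncard := rfl
    rw [hcompl]
    rw [hr, Nat.card_eq_fintype_card] at h0
    omega
  have e2 : Nat.card (Σ c : Fin m → Bool, (extGraph H' c ↪g G)) =
      ∑ c : Fin m → Bool, Nat.card (extGraph H' c ↪g G) := by
    rw [Nat.card_eq_fintype_card, Fintype.card_sigma]
    exact Finset.sum_congr rfl (fun c _ => (Nat.card_eq_fintype_card).symm)
  have e1 : Nat.card (Σ f : H' ↪g G, {v : V // v ∉ Set.range (f : Fin m → V)}) =
      Nat.card (H' ↪g G) * (n - m) := by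
    rw [Nat.card_eq_fintype_card, Fintype.card_sigma]
    rw [Finset.sum_congr rfl (fun f _ => by rw [← Nat.card_eq_fintype_card, hfib f])]
    rw [Finset.sum_const, Finset.card_univ, Nat.card_eq_fintype_card, smul_eq_mul]
  have hA : Nat.card (H' ↪g G) * (n - m) * 2 ^ ((m + 1).choose 2) =
      2 ^ m * (n.choose (m + 1) * (m + 1).factorial) := by
    calc Nat.card (H' ↪g G) * (n - m) * 2 ^ ((m + 1).choose 2)
        = Nat.card (Σ c : Fin m → Bool, (extGraph H' c ↪g G)) * 2 ^ ((m + 1).choose 2) := by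
          rw [card_sigma_eq, e1]
      _ = (∑ c : Fin m → Bool, Nat.card (extGraph H' c ↪g G)) * 2 ^ ((m + 1).choose 2) := by
          rw [e2]
      _ = ∑ c : Fin m → Bool, Nat.card (extGraph H' c ↪g G) * 2 ^ ((m + 1).choose 2) := by
          rw [Finset.sum_mul]
      _ = ∑ _c : Fin m → Bool, n.choose (m + 1) * (m + 1).factorial := by
          exact Finset.sum_congr rfl (fun c _ => hord c)
      _ = 2 ^ m * (n.choose (m + 1) * (m + 1).factorial) := by
          rw [Finset.sum_const, Finset.card_univ, smul_eq_mul]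
          congr 1
          simp
  have hch : (m + 1).choose 2 = m + m.choose 2 := by
    show (m + 1).choose (1 + 1) = m + m.choose 2
    rw [Nat.choose_succ_succ, Nat.choose_one_right]
  have hB : Nat.card (H' ↪g G) * (n - m) * 2 ^ (m.choose 2) =
      n.choose (m + 1) * (m + 1).factorial := by
    have h2m : (0 : ℕ) < 2 ^ m := Nat.pow_pos (by norm_num)
    apply Nat.eq_of_mul_eq_mul_left h2m
    calc 2 ^ m * (Nat.card (H' ↪g G) * (n - m) * 2 ^ (m.choose 2))
        = Nat.card (H' ↪g G) * (n - m) * 2 ^ ((m + 1).choose 2) := by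
          rw [hch, pow_add]; ring
      _ = 2 ^ m * (n.choose (m + 1) * (m + 1).factorial) := hA
  have hX : n.choose (m + 1) * (m + 1).factorial = n.choose m * m.factorial * (n - m) := by
    calc n.choose (m + 1) * (m + 1).factorial
        = (n.choose (m + 1) * (m + 1)) * m.factorial := by
          rw [Nat.factorial_succ]; ring
      _ = (n.choose m * (n - m)) * m.factorial := by rw [Nat.choose_succ_right_eq]
      _ = n.choose m * m.factorial * (n - m) := by ring
  have hnm : 0 < n - m := by omega
  apply Nat.eq_of_mul_eq_mul_right hnm
  calc Nat.card (H' ↪g G) * 2 ^ (m.choose 2) * (n - m)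
      = Nat.card (H' ↪g G) * (n - m) * 2 ^ (m.choose 2) := by ring
    _ = n.choose (m + 1) * (m + 1).factorial := hB
    _ = n.choose m * m.factorial * (n - m) := hX

end Aux

/-- A `k`-symmetric graph on `n ≥ k` vertices (`k ≥ 2`) is `(k-1)`-symmetric. -/
theorem stmt7 {V : Type*} [Fintype V] (G : SimpleGraph V) (k : ℕ) (hk : 2 ≤ k)
    (hn : k ≤ Fintype.card V) (h : IsKSym G k) : IsKSym G (k - 1) := by
  have hk1 : k - 1 + 1 = k := by omega
  exact key_step G (k - 1) (by rw [hk1]; exact hn) (by rw [hk1]; exact h)
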